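/- The Identity Rule is sound for inclusion atoms: if a team X satisfies ab ⊆ cc (i.e., for every s ∈ X there is s' ∈ X with s(a) = s'(c) and s(b) = s'(c)), then every s ∈ X satisfies s(a) = s(b); consequently, if X also satisfies an inclusion atom φ, then X satisfies the atom φ' obtained from φ by replacing occurrences of the variable a with b. -/
import Mathlib


/-- A team is a set of assignments; the inclusion atom `x ⊆ y` holds in team `X`
iff for every `s ∈ X` there is `s' ∈ X` with `s(x) = s'(y)` componentwise. -/
def InclAtom {M Var : Type*} {n : ℕ} (X : Set (Var → M)) (x y : Fin n → Var) : Prop :=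
  ∀ s ∈ X, ∃ s' ∈ X, ∀ i, s (x i) = s' (y i)

/-- Identity Rule: if X satisfies ab ⊆ cc then every s ∈ X has s(a) = s(b), and
any inclusion atom remains satisfied after replacing any occurrences of a by b. -/
theorem identity_rule {M Var : Type*} (X : Set (Var → M)) (a b c : Var)
    (h : InclAtom X ![a, b] ![c, c]) :
    (∀ s ∈ X, s a = s b) ∧
    (∀ {n : ℕ} (u w u' w' : Fin n → Var),
      (∀ i, u' i = u i ∨ (u i = a ∧ u' i = b)) →
      (∀ i, w' i = w i ∨ (w i = a ∧ w' i = b)) →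
      InclAtom X u w → InclAtom X u' w') := by
  have hab : ∀ s ∈ X, s a = s b := by
    intro s hs
    obtain ⟨s', hs', hi⟩ := h s hs
    have h0 := hi 0
    have h1 := hi 1
    simp at h0 h1
    rw [h0, h1]
  refine ⟨hab, ?_⟩
  intro n u w u' w' hu hw hI s hs
  have key : ∀ (t : _) (_ : t ∈ X) (v v' : Var),
      (v' = v ∨ (v = a ∧ v' = b)) → t v' = t v := by
    rintro t ht v v' (rfl | ⟨rfl, rfl⟩)
    · rfl
    · exact (hab t ht).symm
  obtain ⟨s', hs', hi⟩ := hI s hs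
  exact ⟨s', hs', fun i => by rw [key s hs (u i) (u' i) (hu i),
    key s' hs' (w i) (w' i) (hw i), hi i]⟩
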